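/- arXiv:2508.16355 — 4 statements merged into one kernel-verified Lean document; each statement's English description precedes it below -/
import Mathlib

section
/- For a real-valued random variable Y with CDF F and observation y, the CRPS defined as ∫_ℝ (F(z) − 1{z ≥ y})² dz equals 2 ∫_0^1 ρ(y, F⁻¹(q)) dq, where ρ(y, ŷ) = (y − ŷ)(q − 1{y ≤ ŷ}) is the quantile (pinball) loss at level q, assuming F is continuous and strictly increasing (so F⁻¹ exists). -/
open MeasureTheory Set

/-- Pinball (quantile) loss at level `q`. -/
noncomputable def pinball (q y c : ℝ) : ℝ := (y - c) * (q - if y ≤ c then 1 else 0)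

/-- Auxiliary kernel: `K z q = (q - 1{y ≤ z}) * (1{q < F z} - 1{y ≤ z})`. -/
noncomputable def crpsK (F : ℝ → ℝ) (y z q : ℝ) : ℝ :=
  (q - if y ≤ z then 1 else 0) * ((if q < F z then 1 else 0) - if y ≤ z then 1 else 0)

lemma crpsK_rep_lt (F : ℝ → ℝ) (y q c : ℝ) (hiff : ∀ z, q < F z ↔ c < z) (hcy : c < y) :
    (fun z => crpsK F y z q) = (Ioo c y).indicator (fun _ => q) := by
  funext z
  by_cases h1 : c < z <;> by_cases h2 : z < y
  · simp [crpsK, indicator_apply, mem_Ioo, h1, h2, if_pos ((hiff z).mpr h1),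
      if_neg (not_le.mpr h2)]
  · simp [crpsK, indicator_apply, mem_Ioo, h1, h2, if_pos ((hiff z).mpr h1),
      if_pos (not_lt.mp h2)]
  · have hq : ¬ q < F z := fun h => h1 ((hiff z).mp h)
    simp [crpsK, indicator_apply, mem_Ioo, h1, h2, if_neg hq, if_neg (not_le.mpr h2)]
  · exact absurd ((hcy.trans_le (not_lt.mp h2)).trans_le (not_lt.mp h1)) (lt_irrefl c)

lemma crpsK_rep_ge (F : ℝ → ℝ) (y q c : ℝ) (hiff : ∀ z, q < F z ↔ c < z) (hyc : y ≤ c) :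
    (fun z => crpsK F y z q) = (Icc y c).indicator (fun _ => 1 - q) := by
  funext z
  by_cases h1 : y ≤ z <;> by_cases h2 : z ≤ c
  · have hq : ¬ q < F z := fun h => absurd ((hiff z).mp h) (not_lt.mpr h2)
    simp [crpsK, indicator_apply, mem_Icc, h1, h2, if_neg hq, if_pos h1]
  · simp [crpsK, indicator_apply, mem_Icc, h1, h2, if_pos ((hiff z).mpr (not_le.mp h2)),
      if_pos h1]
  · have hzc : ¬ c < z := not_lt.mpr (le_of_lt (lt_of_lt_of_le (not_le.mp h1) hyc))
    have hq : ¬ q < F z := fun h => hzc ((hiff z).mp h)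
    simp [crpsK, indicator_apply, mem_Icc, h1, if_neg hq, if_neg h1]
  · exact absurd (le_trans hyc (le_of_not_ge h2)) h1

/-- For a continuous strictly increasing CDF `F` with inverse `Finv` on `(0,1)`,
the CRPS `∫ (F z - 1{z ≥ y})² dz` equals `2 ∫_0^1 ρ_q(y, F⁻¹(q)) dq`. -/
theorem crps_eq_two_integral_pinball
    (F Finv : ℝ → ℝ) (y : ℝ)
    (hFcont : Continuous F) (hFmono : StrictMono F)
    (hFrange : ∀ x, F x ∈ Ioo (0 : ℝ) 1)
    (hinv₁ : ∀ q ∈ Ioo (0 : ℝ) 1, F (Finv q) = q)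
    (hinv₂ : ∀ x, Finv (F x) = x)
    (hint₁ : Integrable (fun z => (F z - if y ≤ z then (1 : ℝ) else 0) ^ 2))
    (hint₂ : IntegrableOn (fun q => pinball q y (Finv q)) (Ioo (0 : ℝ) 1)) :
    ∫ z, (F z - if y ≤ z then (1 : ℝ) else 0) ^ 2
      = 2 * ∫ q in Ioo (0 : ℝ) 1, pinball q y (Finv q) := by
  -- key facts per q
  have key : ∀ q ∈ Ioo (0:ℝ) 1,
      Integrable (fun z => crpsK F y z q) ∧ (∀ z, 0 ≤ crpsK F y z q) ∧
      ∫ z, crpsK F y z q = pinball q y (Finv q) := by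
    intro q hq
    set c := Finv q with hc
    have hFc : F c = q := hinv₁ q hq
    have hiff : ∀ z, q < F z ↔ c < z := by
      intro z; rw [← hFc]; exact hFmono.lt_iff_lt
    by_cases hcy : c < y
    · have hrep := crpsK_rep_lt F y q c hiff hcy
      refine ⟨?_, ?_, ?_⟩
      · rw [hrep]
        exact (integrableOn_const measure_Ioo_lt_top.ne).integrable_indicator
          measurableSet_Ioo
      · intro z; rw [congrFun hrep z]
        exact indicator_nonneg (fun _ _ => hq.1.le) z
      · rw [hrep, integral_indicator measurableSet_Ioo, setIntegral_const,
          Real.volume_real_Ioo_of_le (by linarith : c ≤ y),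
          smul_eq_mul]
        simp only [pinball, if_neg (not_le.mpr hcy)]
        ring
    · have hyc : y ≤ c := le_of_not_gt hcy
      have hrep := crpsK_rep_ge F y q c hiff hyc
      refine ⟨?_, ?_, ?_⟩
      · rw [hrep]
        exact (integrableOn_const measure_Icc_lt_top.ne).integrable_indicator
          measurableSet_Icc
      · intro z; rw [congrFun hrep z]
        exact indicator_nonneg (fun _ _ => by linarith [hq.2]) z
      · rw [hrep, integral_indicator measurableSet_Icc, setIntegral_const,
          Real.volume_real_Icc_of_le (by linarith : y ≤ c),
          smul_eq_mul]
        simp only [pinball, if_pos hyc]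
        ring
  -- inner integral over q
  have step1 : ∀ z, (F z - if y ≤ z then (1:ℝ) else 0) ^ 2
      = 2 * ∫ q in Ioo (0:ℝ) 1, crpsK F y z q := by
    intro z
    obtain ⟨h0, h1⟩ := hFrange z
    by_cases hz : y ≤ z
    · have hrep : ∀ q, crpsK F y z q = (Ici (F z)).indicator (fun q => 1 - q) q := by
        intro q
        by_cases h : q < F z
        · simp [crpsK, indicator_apply, mem_Ici, if_pos hz, if_pos h, not_le.mpr h]
        · simp [crpsK, indicator_apply, mem_Ici, if_pos hz, if_neg h, not_lt.mp h]
      have hset : Ioo (0:ℝ) 1 ∩ Ici (F z) = Ico (F z) 1 := by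
        ext t
        simp only [mem_inter_iff, mem_Ioo, mem_Ici, mem_Ico]
        constructor
        · rintro ⟨⟨_, ht1⟩, ht2⟩; exact ⟨ht2, ht1⟩
        · rintro ⟨ht1, ht2⟩; exact ⟨⟨lt_of_lt_of_le h0 ht1, ht2⟩, ht1⟩
      have : ∫ q in Ioo (0:ℝ) 1, crpsK F y z q = ∫ q in Ico (F z) 1, (1 - q) := by
        rw [show (fun q => crpsK F y z q) = fun q => (Ici (F z)).indicator (fun q => 1 - q) q
          from funext hrep]
        rw [setIntegral_indicator measurableSet_Ici, hset]
      rw [this, integral_Ico_eq_integral_Ioo, ← integral_Ioc_eq_integral_Ioo,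
        ← intervalIntegral.integral_of_le h1.le]
      have : ∫ q in (F z)..1, (1 - q) = (1 - F z) - (1 - (F z)^2) / 2 := by
        rw [intervalIntegral.integral_sub intervalIntegrable_const
          intervalIntegral.intervalIntegrable_id,
          intervalIntegral.integral_const, integral_id]
        simp
      rw [this, if_pos hz]
      ring
    · have hrep : ∀ q, crpsK F y z q = (Iio (F z)).indicator (fun q => q) q := by
        intro q
        by_cases h : q < F z
        · simp [crpsK, indicator_apply, mem_Iio, if_neg hz, if_pos h]
        · simp [crpsK, indicator_apply, mem_Iio, if_neg hz, if_neg h]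
      have hset : Ioo (0:ℝ) 1 ∩ Iio (F z) = Ioo 0 (F z) := by
        ext t
        simp only [mem_inter_iff, mem_Ioo, mem_Iio]
        constructor
        · rintro ⟨⟨ht0, _⟩, ht2⟩; exact ⟨ht0, ht2⟩
        · rintro ⟨ht0, ht2⟩; exact ⟨⟨ht0, ht2.trans h1⟩, ht2⟩
      have : ∫ q in Ioo (0:ℝ) 1, crpsK F y z q = ∫ q in Ioo 0 (F z), q := by
        rw [show (fun q => crpsK F y z q) = fun q => (Iio (F z)).indicator (fun q => q) q
          from funext hrep]
        rw [setIntegral_indicator measurableSet_Iio, hset]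
      rw [this, ← integral_Ioc_eq_integral_Ioo, ← intervalIntegral.integral_of_le h0.le,
        integral_id, if_neg hz]
      ring
  -- measurability of the uncurried kernel
  have hmeas : Measurable (fun p : ℝ × ℝ => crpsK F y p.2 p.1) := by
    have h1 : MeasurableSet {p : ℝ × ℝ | y ≤ p.2} :=
      measurableSet_le measurable_const measurable_snd
    have h2 : MeasurableSet {p : ℝ × ℝ | p.1 < F p.2} :=
      measurableSet_lt measurable_fst (hFcont.measurable.comp measurable_snd)
    exact ((measurable_fst.sub ((measurable_const.ite h1 measurable_const))).mul
      (((measurable_const.ite h2 measurable_const)).sub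
        ((measurable_const.ite h1 measurable_const))))
  -- integrability on the product
  have hnorm : ∀ q ∈ Ioo (0:ℝ) 1, (fun z => ‖crpsK F y z q‖) = fun z => crpsK F y z q := by
    intro q hq
    funext z
    exact Real.norm_of_nonneg ((key q hq).2.1 z)
  have hfint : Integrable (fun p : ℝ × ℝ => crpsK F y p.2 p.1)
      ((volume.restrict (Ioo (0:ℝ) 1)).prod volume) := by
    rw [integrable_prod_iff hmeas.aestronglyMeasurable]
    constructor
    · filter_upwards [ae_restrict_mem measurableSet_Ioo] with q hq
      exact (key q hq).1
    · apply hint₂.congr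
      filter_upwards [ae_restrict_mem measurableSet_Ioo] with q hq
      rw [hnorm q hq]
      exact ((key q hq).2.2).symm
  -- Fubini
  have hswap : ∫ q in Ioo (0:ℝ) 1, ∫ z, crpsK F y z q
      = ∫ z, ∫ q in Ioo (0:ℝ) 1, crpsK F y z q :=
    MeasureTheory.integral_integral_swap hfint
  calc ∫ z, (F z - if y ≤ z then (1:ℝ) else 0) ^ 2
      = ∫ z, 2 * ∫ q in Ioo (0:ℝ) 1, crpsK F y z q := by
        exact integral_congr_ae (Filter.Eventually.of_forall step1)
    _ = 2 * ∫ z, ∫ q in Ioo (0:ℝ) 1, crpsK F y z q := by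
        rw [integral_const_mul]
    _ = 2 * ∫ q in Ioo (0:ℝ) 1, ∫ z, crpsK F y z q := by rw [hswap]
    _ = 2 * ∫ q in Ioo (0:ℝ) 1, pinball q y (Finv q) := by
        congr 1
        refine setIntegral_congr_fun measurableSet_Ioo fun q hq => ?_
        exact (key q hq).2.2
end

section
/- Let P be a probability measure on ℝ with CDF G, and let F be any CDF. Then E_{y∼P} ∫_ℝ (F(z) − 1{z ≥ y})² dz = ∫_ℝ [(F(z) − G(z))² + G(z)(1 − G(z))] dz, assuming all integrals are finite. -/
open MeasureTheory Set

/-- For a probability measure `P` on ℝ with CDF `G` and any CDF `F`,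
`E_{y∼P} ∫ (F z - 1{z ≥ y})² dz = ∫ [(F z - G z)² + G z (1 - G z)] dz`. -/
theorem expected_crps_decomposition
    (P : Measure ℝ) [IsProbabilityMeasure P] (F G : ℝ → ℝ)
    (hG : ∀ z, G z = (P (Iic z)).toReal)
    (hFmeas : Measurable F) (hFmono : Monotone F)
    (hFrange : ∀ z, F z ∈ Icc (0 : ℝ) 1)
    (hint_inner : ∀ y : ℝ, Integrable (fun z => (F z - if y ≤ z then (1 : ℝ) else 0) ^ 2))
    (hint_outer : Integrable
      (fun y => ∫ z, (F z - if y ≤ z then (1 : ℝ) else 0) ^ 2) P)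
    (hint_rhs : Integrable (fun z => (F z - G z) ^ 2 + G z * (1 - G z))) :
    ∫ y, (∫ z, (F z - if y ≤ z then (1 : ℝ) else 0) ^ 2) ∂P
      = ∫ z, ((F z - G z) ^ 2 + G z * (1 - G z)) := by
  set f : ℝ → ℝ → ℝ := fun y z => (F z - if y ≤ z then (1 : ℝ) else 0) ^ 2 with hfdef
  have hfmeas : Measurable (Function.uncurry f) := by
    apply Measurable.pow _ measurable_const
    exact (hFmeas.comp measurable_snd).sub
      (Measurable.ite (measurableSet_le measurable_fst measurable_snd)
        measurable_const measurable_const)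
  have hfnn : ∀ y z, 0 ≤ f y z := fun y z => sq_nonneg _
  have hjoint : Integrable (Function.uncurry f) (P.prod volume) := by
    refine ⟨hfmeas.aestronglyMeasurable, ?_⟩
    rw [hasFiniteIntegral_iff_norm]
    have h1 : ∀ p : ℝ × ℝ, ENNReal.ofReal ‖Function.uncurry f p‖
        = ENNReal.ofReal (f p.1 p.2) := by
      intro p
      show ENNReal.ofReal ‖f p.1 p.2‖ = _
      rw [Real.norm_of_nonneg (hfnn _ _)]
    simp only [h1]
    rw [lintegral_prod (fun p => ENNReal.ofReal (f p.1 p.2))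
      ((ENNReal.measurable_ofReal.comp hfmeas).aemeasurable)]
    have h2 : ∀ y : ℝ, ∫⁻ z, ENNReal.ofReal (f y z) = ENNReal.ofReal (∫ z, f y z) := by
      intro y
      rw [ofReal_integral_eq_lintegral_ofReal (hint_inner y)
        (Filter.Eventually.of_forall (hfnn y))]
    simp only [h2]
    rw [← ofReal_integral_eq_lintegral_ofReal hint_outer
      (Filter.Eventually.of_forall fun y => integral_nonneg (hfnn y))]
    exact ENNReal.ofReal_lt_top
  have hswap : ∫ y, (∫ z, f y z) ∂P = ∫ z, (∫ y, f y z ∂P) := by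
    exact integral_integral_swap hjoint
  rw [show (∫ y, (∫ z, (F z - if y ≤ z then (1 : ℝ) else 0) ^ 2) ∂P)
      = ∫ y, (∫ z, f y z) ∂P from rfl, hswap]
  refine integral_congr_ae (Filter.Eventually.of_forall fun z => ?_)
  -- compute the inner integral over y for fixed z
  have hsplit : ∀ y : ℝ, f y z
      = (Iic z).indicator (fun _ => (F z - 1) ^ 2 - (F z) ^ 2) y + (F z) ^ 2 := by
    intro y
    by_cases h : y ≤ z <;> simp [hfdef, indicator, h, mem_Iic]
  calc ∫ y, f y z ∂P
      = ∫ y, ((Iic z).indicator (fun _ => (F z - 1) ^ 2 - (F z) ^ 2) y + (F z) ^ 2) ∂P := by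
        exact integral_congr_ae (Filter.Eventually.of_forall hsplit)
    _ = ((F z - 1) ^ 2 - (F z) ^ 2) * G z + (F z) ^ 2 := by
        rw [integral_add ((integrable_const _).indicator measurableSet_Iic) (integrable_const _),
          integral_indicator_const _ measurableSet_Iic, integral_const]
        simp [hG z, mul_comm, measureReal_def]
    _ = (F z - G z) ^ 2 + G z * (1 - G z) := by ring
end

section
/- Among all CDFs F for which ∫_ℝ (F(z) − G(z))² dz is finite, the expected CRPS E_{y∼P} CRPS(F, y) is minimized uniquely (up to almost-everywhere equality) at F = G, where G is the CDF of P; the minimum value equals ∫_ℝ G(z)(1 − G(z)) dz. -/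
open MeasureTheory Set Filter

theorem crps_key (P : Measure ℝ) [IsProbabilityMeasure P] (G : ℝ → ℝ)
    (hG : ∀ z, G z = (P (Iic z)).toReal)
    (hGint : Integrable (fun z => G z * (1 - G z)))
    (F : ℝ → ℝ) (hFm : Measurable F)
    (hFGint : Integrable (fun z => (F z - G z) ^ 2)) :
    ∫ y, (∫ z, (F z - if y ≤ z then (1 : ℝ) else 0) ^ 2) ∂P
      = (∫ z, (F z - G z) ^ 2) + ∫ z, G z * (1 - G z) := by
  -- basic facts about G
  have hGcdf : G = fun z => ProbabilityTheory.cdf P z := by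
    funext z; rw [hG, ProbabilityTheory.cdf_eq_real, measureReal_def]
  have hG0 : ∀ z, 0 ≤ G z := by
    intro z; rw [hGcdf]; exact ProbabilityTheory.cdf_nonneg P z
  have hG1 : ∀ z, G z ≤ 1 := by
    intro z; rw [hGcdf]; exact ProbabilityTheory.cdf_le_one P z
  have hGmono : Monotone G := by
    rw [hGcdf]; exact ProbabilityTheory.monotone_cdf P
  have hGm : Measurable G := hGmono.measurable
  -- split points
  obtain ⟨c, hc⟩ : ∃ c, G c ≤ 1/2 := by
    have := ProbabilityTheory.tendsto_cdf_atBot (μ := P)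
    have h2 := this.eventually_le_const (show (0:ℝ) < 1/2 by norm_num)
    obtain ⟨c, hc⟩ := h2.exists
    exact ⟨c, by rw [hGcdf]; exact hc⟩
  obtain ⟨d, hd⟩ : ∃ d, 1/2 ≤ G d := by
    have := ProbabilityTheory.tendsto_cdf_atTop (μ := P)
    have h2 := this.eventually_const_le (show (1:ℝ)/2 < 1 by norm_num)
    obtain ⟨d, hd⟩ := h2.exists
    exact ⟨d, by rw [hGcdf]; exact hd⟩
  -- tail integrability of G and 1 - G
  have hGIic : ∀ a : ℝ, IntegrableOn G (Iic a) := by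
    intro a
    have h1 : IntegrableOn G (Iic (min a c)) := by
      refine Integrable.mono' ((hGint.const_mul 2).integrableOn) hGm.aestronglyMeasurable ?_
      rw [ae_restrict_iff' measurableSet_Iic]
      refine Eventually.of_forall fun z hz => ?_
      have hzc : G z ≤ 1/2 := le_trans (hGmono (le_trans hz (min_le_right a c))) hc
      have : ‖G z‖ = G z := Real.norm_of_nonneg (hG0 z)
      rw [this]
      nlinarith [hG0 z]
    have h2 : IntegrableOn G (Icc (min a c) a) := by
      refine Measure.integrableOn_of_bounded (M := 1) ?_ hGm.aestronglyMeasurable ?_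
      · exact (measure_Icc_lt_top).ne
      · exact Eventually.of_forall fun z => by
          rw [Real.norm_of_nonneg (hG0 z)]; exact hG1 z
    have : Iic a ⊆ Iic (min a c) ∪ Icc (min a c) a := by
      intro z hz
      rcases le_or_gt z (min a c) with h | h
      · exact Or.inl h
      · exact Or.inr ⟨h.le, hz⟩
    exact (h1.union h2).mono_set this
  have h1GIci : ∀ a : ℝ, IntegrableOn (fun z => 1 - G z) (Ici a) := by
    intro a
    have h1 : IntegrableOn (fun z => 1 - G z) (Ici (max a d)) := by
      refine Integrable.mono' ((hGint.const_mul 2).integrableOn) ((measurable_const.sub hGm).aestronglyMeasurable) ?_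
      rw [ae_restrict_iff' measurableSet_Ici]
      refine Eventually.of_forall fun z hz => ?_
      have hzd : 1/2 ≤ G z := le_trans hd (hGmono (le_trans (le_max_right a d) hz))
      have : ‖1 - G z‖ = 1 - G z := Real.norm_of_nonneg (by linarith [hG1 z])
      rw [this]
      nlinarith [hG1 z]
    have h2 : IntegrableOn (fun z => 1 - G z) (Icc a (max a d)) := by
      refine Measure.integrableOn_of_bounded (M := 1) ?_ ((measurable_const.sub hGm).aestronglyMeasurable) ?_
      · exact (measure_Icc_lt_top).ne
      · exact Eventually.of_forall fun z => by
          rw [Real.norm_of_nonneg (by linarith [hG1 z])]; linarith [hG0 z]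
    have : Ici a ⊆ Icc a (max a d) ∪ Ici (max a d) := by
      intro z hz
      rcases le_or_gt z (max a d) with h | h
      · exact Or.inl ⟨hz, h⟩
      · exact Or.inr h.le
    exact (h2.union h1).mono_set this
  -- per-y integrability of (G - ind)^2
  have hindm : ∀ y : ℝ, Measurable (fun z => if y ≤ z then (1:ℝ) else 0) := by
    intro y
    exact Measurable.ite measurableSet_Ici measurable_const measurable_const
  have hDm : ∀ y : ℝ, Measurable (fun z => (G z - if y ≤ z then (1:ℝ) else 0) ^ 2) := by
    intro y; exact (hGm.sub (hindm y)).pow_const 2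
  have hDy : ∀ y : ℝ, Integrable (fun z => (G z - if y ≤ z then (1:ℝ) else 0) ^ 2) := by
    intro y
    rw [← integrableOn_univ, ← Iio_union_Ici (a := y)]
    refine IntegrableOn.union ?_ ?_
    · refine Integrable.mono' ((hGIic y).mono_set Iio_subset_Iic_self)
        (hDm y).aestronglyMeasurable ?_
      rw [ae_restrict_iff' measurableSet_Iio]
      refine Eventually.of_forall fun z hz => ?_
      have : ¬ y ≤ z := not_le.mpr hz
      simp only [this, if_false, sub_zero]
      rw [Real.norm_of_nonneg (sq_nonneg _)]
      nlinarith [hG0 z, hG1 z]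
    · refine Integrable.mono' (h1GIci y) (hDm y).aestronglyMeasurable ?_
      rw [ae_restrict_iff' measurableSet_Ici]
      refine Eventually.of_forall fun z hz => ?_
      have : y ≤ z := hz
      simp only [this, if_true]
      rw [Real.norm_of_nonneg (sq_nonneg _)]
      nlinarith [hG0 z, hG1 z]
  -- per-y integrability of (F - ind)^2 and cross term
  have hFy : ∀ y : ℝ, Integrable (fun z => (F z - if y ≤ z then (1:ℝ) else 0) ^ 2) := by
    intro y
    refine Integrable.mono' ((hFGint.add (hDy y)).const_mul 2)
      (((hFm.sub (hindm y)).pow_const 2).aestronglyMeasurable) ?_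
    refine Eventually.of_forall fun z => ?_
    rw [Real.norm_of_nonneg (sq_nonneg _)]
    simp only [Pi.add_apply]
    nlinarith [sq_nonneg ((F z - G z) - (G z - if y ≤ z then (1:ℝ) else 0))]
  have hCy : ∀ y : ℝ, Integrable (fun z => (F z - G z) * (G z - if y ≤ z then (1:ℝ) else 0)) := by
    intro y
    refine Integrable.mono' ((hFGint.add (hDy y)).const_mul (1/2))
      (((hFm.sub hGm).mul (hGm.sub (hindm y))).aestronglyMeasurable) ?_
    refine Eventually.of_forall fun z => ?_
    have h := abs_mul (F z - G z) (G z - if y ≤ z then (1:ℝ) else 0)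
    rw [Real.norm_eq_abs, h]
    simp only [Pi.add_apply]
    nlinarith [sq_nonneg (|F z - G z| - |G z - if y ≤ z then (1:ℝ) else 0|),
      sq_abs (F z - G z), sq_abs (G z - if y ≤ z then (1:ℝ) else 0),
      abs_nonneg (F z - G z), abs_nonneg (G z - if y ≤ z then (1:ℝ) else 0)]
  -- inner expansion
  have hinner : ∀ y : ℝ,
      (∫ z, (F z - if y ≤ z then (1:ℝ) else 0) ^ 2)
        = (∫ z, (F z - G z) ^ 2)
          + ((2 * ∫ z, (F z - G z) * (G z - if y ≤ z then (1:ℝ) else 0))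
            + ∫ z, (G z - if y ≤ z then (1:ℝ) else 0) ^ 2) := by
    intro y
    have hrw : (fun z => (F z - if y ≤ z then (1:ℝ) else 0) ^ 2)
        = fun z => (F z - G z) ^ 2
          + (2 * ((F z - G z) * (G z - if y ≤ z then (1:ℝ) else 0))
            + (G z - if y ≤ z then (1:ℝ) else 0) ^ 2) := by
      funext z; ring
    have hsum : Integrable (fun z => 2 * ((F z - G z) * (G z - if y ≤ z then (1:ℝ) else 0))
        + (G z - if y ≤ z then (1:ℝ) else 0) ^ 2) :=
      (((hCy y).const_mul 2).add (hDy y) : )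
    rw [hrw, integral_add hFGint hsum,
      integral_add ((hCy y).const_mul 2) (hDy y), integral_const_mul]
  -- integral of the indicator over P
  have hIndEq : ∀ z : ℝ, (fun y => if y ≤ z then (1:ℝ) else 0)
      = (Iic z).indicator (fun _ => (1:ℝ)) := by
    intro z; funext y
    by_cases h : y ≤ z <;> simp [indicator, h]
  have hIndInt : ∀ z : ℝ, Integrable (fun y => if y ≤ z then (1:ℝ) else 0) P := by
    intro z; rw [hIndEq z]
    exact (integrable_const (1:ℝ)).indicator measurableSet_Iic
  have hIndVal : ∀ z : ℝ, (∫ y, (if y ≤ z then (1:ℝ) else 0) ∂P) = G z := by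
    intro z
    rw [hIndEq z, integral_indicator_const (1:ℝ) measurableSet_Iic, hG z, smul_eq_mul, mul_one, measureReal_def]
  -- pointwise P-integral of (G - ind)^2
  have hPoint : ∀ z : ℝ, (∫ y, (G z - if y ≤ z then (1:ℝ) else 0) ^ 2 ∂P)
      = G z * (1 - G z) := by
    intro z
    have hrw : (fun y => (G z - if y ≤ z then (1:ℝ) else 0) ^ 2)
        = fun y => (G z)^2 + (1 - 2 * G z) * (if y ≤ z then (1:ℝ) else 0) := by
      funext y; by_cases h : y ≤ z <;> simp [h] <;> ring
    rw [hrw, integral_add (integrable_const _) ((hIndInt z).const_mul _),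
      integral_const_mul, hIndVal z, integral_const]
    simp only [measure_univ, ENNReal.toReal_one, probReal_univ, one_smul]
    ring
  -- product integrability of (G - ind)^2
  have hprodmeas : Measurable (fun p : ℝ × ℝ => (G p.2 - if p.1 ≤ p.2 then (1:ℝ) else 0) ^ 2) := by
    refine ((hGm.comp measurable_snd).sub ?_).pow_const 2
    exact Measurable.ite (measurableSet_le measurable_fst measurable_snd)
      measurable_const measurable_const
  have hf0 : Integrable (fun p : ℝ × ℝ => (G p.2 - if p.1 ≤ p.2 then (1:ℝ) else 0) ^ 2)
      (P.prod volume) := by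
    rw [integrable_prod_iff' hprodmeas.aestronglyMeasurable]
    constructor
    · refine Eventually.of_forall fun z => ?_
      have hsecm : Measurable (fun y => (G z - if y ≤ z then (1:ℝ) else 0) ^ 2) :=
        (measurable_const.sub
          (Measurable.ite measurableSet_Iic measurable_const measurable_const)).pow_const 2
      refine Integrable.mono' (integrable_const (1:ℝ)) hsecm.aestronglyMeasurable ?_
      refine Eventually.of_forall fun y => ?_
      rw [Real.norm_of_nonneg (sq_nonneg _)]
      by_cases h : y ≤ z <;> simp only [h, if_true, if_false] <;>
        nlinarith [hG0 z, hG1 z]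
    · refine hGint.congr (Eventually.of_forall fun z => ?_)
      show G z * (1 - G z) = ∫ y, ‖(G z - if y ≤ z then (1:ℝ) else 0) ^ 2‖ ∂P
      rw [← hPoint z]
      exact (integral_congr_ae (Eventually.of_forall fun y =>
        (Real.norm_of_nonneg (sq_nonneg _)))).symm
  -- product integrability of (F - G)^2 (constant in y)
  have hconstprod : Integrable (fun p : ℝ × ℝ => (F p.2 - G p.2) ^ 2) (P.prod volume) := by
    refine (integrable_prod_iff' (f := fun p : ℝ × ℝ => (F p.2 - G p.2) ^ 2)
      (((hFm.comp measurable_snd).sub (hGm.comp measurable_snd)).pow_const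
        2).aestronglyMeasurable).mpr ⟨?_, ?_⟩
    · exact Eventually.of_forall fun z => integrable_const ((F z - G z) ^ 2)
    · refine hFGint.congr (Eventually.of_forall fun z => ?_)
      show (F z - G z) ^ 2 = ∫ y, ‖(F z - G z) ^ 2‖ ∂P
      rw [integral_const]
      simp [Real.norm_of_nonneg (sq_nonneg _)]
  -- product integrability of the cross term
  have hcrossm : Measurable (fun p : ℝ × ℝ =>
      (F p.2 - G p.2) * (G p.2 - if p.1 ≤ p.2 then (1:ℝ) else 0)) := by
    refine ((hFm.comp measurable_snd).sub (hGm.comp measurable_snd)).mul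
      ((hGm.comp measurable_snd).sub ?_)
    exact Measurable.ite (measurableSet_le measurable_fst measurable_snd)
      measurable_const measurable_const
  have hcrossprod : Integrable (fun p : ℝ × ℝ =>
      (F p.2 - G p.2) * (G p.2 - if p.1 ≤ p.2 then (1:ℝ) else 0)) (P.prod volume) := by
    refine Integrable.mono' ((hconstprod.add hf0).const_mul (1/2))
      hcrossm.aestronglyMeasurable ?_
    refine Eventually.of_forall fun p => ?_
    have h := abs_mul (F p.2 - G p.2) (G p.2 - if p.1 ≤ p.2 then (1:ℝ) else 0)
    rw [Real.norm_eq_abs, h]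
    simp only [Pi.add_apply]
    nlinarith [sq_nonneg (|F p.2 - G p.2| - |G p.2 - if p.1 ≤ p.2 then (1:ℝ) else 0|),
      sq_abs (F p.2 - G p.2), sq_abs (G p.2 - if p.1 ≤ p.2 then (1:ℝ) else 0),
      abs_nonneg (F p.2 - G p.2), abs_nonneg (G p.2 - if p.1 ≤ p.2 then (1:ℝ) else 0)]
  -- integrability over P of the two inner integrals
  have hD : Integrable (fun y => ∫ z, (G z - if y ≤ z then (1:ℝ) else 0) ^ 2) P :=
    hf0.integral_prod_left
  have hC : Integrable (fun y => ∫ z, (F z - G z) * (G z - if y ≤ z then (1:ℝ) else 0)) P :=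
    hcrossprod.integral_prod_left
  -- value of ∫ D dP via Fubini
  have hDval : (∫ y, (∫ z, (G z - if y ≤ z then (1:ℝ) else 0) ^ 2) ∂P)
      = ∫ z, G z * (1 - G z) := by
    rw [integral_integral_swap
      (f := fun y z => (G z - if y ≤ z then (1:ℝ) else 0) ^ 2) hf0]
    exact integral_congr_ae (Eventually.of_forall hPoint)
  -- value of ∫ C dP via Fubini
  have hCval : (∫ y, (∫ z, (F z - G z) * (G z - if y ≤ z then (1:ℝ) else 0)) ∂P) = 0 := by
    rw [integral_integral_swap
      (f := fun y z => (F z - G z) * (G z - if y ≤ z then (1:ℝ) else 0)) hcrossprod]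
    have : ∀ z : ℝ, (∫ y, (F z - G z) * (G z - if y ≤ z then (1:ℝ) else 0) ∂P) = 0 := by
      intro z
      rw [integral_const_mul]
      have : (∫ y, (G z - if y ≤ z then (1:ℝ) else 0) ∂P) = 0 := by
        rw [integral_sub (integrable_const _) (hIndInt z), hIndVal z, integral_const]
        simp [measure_univ]
      rw [this, mul_zero]
    rw [integral_congr_ae (Eventually.of_forall this), integral_zero]
  -- put everything together
  calc ∫ y, (∫ z, (F z - if y ≤ z then (1:ℝ) else 0) ^ 2) ∂P
      = ∫ y, ((∫ z, (F z - G z) ^ 2)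
          + ((2 * ∫ z, (F z - G z) * (G z - if y ≤ z then (1:ℝ) else 0))
            + ∫ z, (G z - if y ≤ z then (1:ℝ) else 0) ^ 2)) ∂P :=
        integral_congr_ae (Eventually.of_forall hinner)
    _ = (∫ z, (F z - G z) ^ 2) + ∫ z, G z * (1 - G z) := by
        have hsum : Integrable (fun y =>
            (2 * ∫ z, (F z - G z) * (G z - if y ≤ z then (1:ℝ) else 0))
              + ∫ z, (G z - if y ≤ z then (1:ℝ) else 0) ^ 2) P :=
          ((hC.const_mul 2).add hD : )
        rw [integral_add (integrable_const _) hsum,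
          integral_add (hC.const_mul 2) hD, integral_const_mul, hCval, hDval,
          integral_const]
        simp [measure_univ]

/-- Among all CDFs `F` with `∫ (F - G)² < ∞`, the expected CRPS
`E_{y∼P} CRPS(F,y)` is minimized uniquely (up to a.e. equality) at `F = G`,
with minimum value `∫ G (1 - G)`. -/
theorem expected_crps_minimized_at_true_cdf
    (P : Measure ℝ) [IsProbabilityMeasure P] (G : ℝ → ℝ)
    (hG : ∀ z, G z = (P (Iic z)).toReal)
    (hGint : Integrable (fun z => G z * (1 - G z))) :
    (∫ y, (∫ z, (G z - if y ≤ z then (1 : ℝ) else 0) ^ 2) ∂P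
        = ∫ z, G z * (1 - G z))
    ∧ (∀ F : ℝ → ℝ, Measurable F → Monotone F → (∀ z, F z ∈ Icc (0 : ℝ) 1) →
        Integrable (fun z => (F z - G z) ^ 2) →
        (∫ y, (∫ z, (G z - if y ≤ z then (1 : ℝ) else 0) ^ 2) ∂P
            ≤ ∫ y, (∫ z, (F z - if y ≤ z then (1 : ℝ) else 0) ^ 2) ∂P)
        ∧ ((∫ y, (∫ z, (F z - if y ≤ z then (1 : ℝ) else 0) ^ 2) ∂P
              = ∫ y, (∫ z, (G z - if y ≤ z then (1 : ℝ) else 0) ^ 2) ∂P)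
            ↔ F =ᵐ[volume] G)) := by
  have hGmono : Monotone G := by
    intro a b hab
    rw [hG, hG]
    exact ENNReal.toReal_mono (measure_ne_top P _) (measure_mono (Iic_subset_Iic.mpr hab))
  have hGm : Measurable G := hGmono.measurable
  have hzfun : (fun z => (G z - G z) ^ 2) = fun _ => (0 : ℝ) := by
    funext z; ring
  have hGGint : Integrable (fun z => (G z - G z) ^ 2) := by
    rw [hzfun]; exact integrable_zero _ _ _
  have hzero : (∫ z, (G z - G z) ^ 2) = 0 := by
    rw [hzfun, integral_zero]
  have hmain : (∫ y, (∫ z, (G z - if y ≤ z then (1 : ℝ) else 0) ^ 2) ∂P)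
      = ∫ z, G z * (1 - G z) := by
    rw [crps_key P G hG hGint G hGm hGGint, hzero, zero_add]
  refine ⟨hmain, fun F hFm _ _ hFGint => ?_⟩
  have hkeyF := crps_key P G hG hGint F hFm hFGint
  have hA : 0 ≤ ∫ z, (F z - G z) ^ 2 := integral_nonneg fun z => sq_nonneg _
  constructor
  · rw [hmain, hkeyF]; linarith
  · rw [hkeyF, hmain]
    constructor
    · intro h
      have hA0 : (∫ z, (F z - G z) ^ 2) = 0 := by linarith
      have hae := (integral_eq_zero_iff_of_nonneg (fun z => sq_nonneg _) hFGint).mp hA0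
      filter_upwards [hae] with z hz
      have h2 : (F z - G z) ^ 2 = 0 := hz
      have h3 : F z - G z = 0 := by
        exact pow_eq_zero_iff (by norm_num) |>.mp h2
      linarith
    · intro h
      have : (fun z => (F z - G z) ^ 2) =ᵐ[volume] (fun _ => (0 : ℝ)) := by
        filter_upwards [h] with z hz
        rw [hz]; ring
      rw [integral_congr_ae this, integral_zero, zero_add]
end

section
/- If F and G are CDFs on ℝ with ∫(F−G)² finite, then E_{y∼P_G}[CRPS(F,y)] ≥ E_{y∼P_G}[CRPS(G,y)], i.e., CRPS is a proper scoring rule; moreover the score difference is zero iff F = G almost everywhere. -/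
open MeasureTheory Set

lemma crps_score_eq (P : Measure ℝ) [IsProbabilityMeasure P] (F G : ℝ → ℝ)
    (hG : ∀ z, G z = (P (Iic z)).toReal)
    (hFmeas : Measurable F)
    (hint : Integrable (fun z => (F z - G z) ^ 2 + G z * (1 - G z))) :
    ∫ y, (∫ z, (F z - if y ≤ z then (1 : ℝ) else 0) ^ 2) ∂P
      = ∫ z, ((F z - G z) ^ 2 + G z * (1 - G z)) := by
  set f : ℝ × ℝ → ℝ := fun p => (F p.2 - if p.1 ≤ p.2 then (1:ℝ) else 0) ^ 2 with hf
  have hind : ∀ z : ℝ, Integrable (fun y => if y ≤ z then (1:ℝ) else 0) P := by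
    intro z
    have := (integrable_const (1:ℝ)).indicator (measurableSet_Iic (a := z)) (μ := P)
    refine this.congr (Filter.Eventually.of_forall fun y => ?_)
    simp [Set.indicator, Set.mem_Iic]
  have hindint : ∀ z : ℝ, ∫ y, (if y ≤ z then (1:ℝ) else 0) ∂P = G z := by
    intro z
    have h1 : (fun y => if y ≤ z then (1:ℝ) else 0)
        = Set.indicator (Iic z) (fun _ => (1:ℝ)) := by
      funext y; simp [Set.indicator, Set.mem_Iic]
    rw [h1, integral_indicator_const (1:ℝ) (measurableSet_Iic), hG z, smul_eq_mul, mul_one, measureReal_def]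
  have hrw : ∀ z y : ℝ, (F z - if y ≤ z then (1:ℝ) else 0) ^ 2
      = (F z)^2 + (1 - 2 * F z) * (if y ≤ z then (1:ℝ) else 0) := by
    intro z y; by_cases h : y ≤ z <;> simp [h] <;> ring
  have hinner : ∀ z : ℝ, ∫ y, (F z - if y ≤ z then (1:ℝ) else 0) ^ 2 ∂P
      = (F z - G z) ^ 2 + G z * (1 - G z) := by
    intro z
    calc ∫ y, (F z - if y ≤ z then (1:ℝ) else 0) ^ 2 ∂P
        = ∫ y, ((F z)^2 + (1 - 2 * F z) * (if y ≤ z then (1:ℝ) else 0)) ∂P := by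
          exact integral_congr_ae (Filter.Eventually.of_forall fun y => hrw z y)
      _ = (F z)^2 + (1 - 2 * F z) * G z := by
          rw [integral_add (integrable_const _) ((hind z).const_mul _),
            integral_const, integral_const_mul, hindint z]
          simp
      _ = (F z - G z) ^ 2 + G z * (1 - G z) := by ring
  have hintegrable : ∀ z : ℝ, Integrable (fun y => f (y, z)) P := by
    intro z
    refine Integrable.congr ((integrable_const ((F z)^2)).add (((hind z).const_mul _)))
      (Filter.Eventually.of_forall fun y => (hrw z y).symm)
  have hmeas : AEStronglyMeasurable f (P.prod volume) := by
    have : Measurable f := by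
      apply Measurable.pow_const
      apply Measurable.sub (hFmeas.comp measurable_snd)
      exact Measurable.ite (measurableSet_le measurable_fst measurable_snd)
        measurable_const measurable_const
    exact this.aestronglyMeasurable
  have hfint : Integrable f (P.prod volume) := by
    rw [integrable_prod_iff' hmeas]
    constructor
    · exact Filter.Eventually.of_forall fun z => hintegrable z
    · refine hint.congr (Filter.Eventually.of_forall fun z => ?_)
      have : ∀ y, ‖f (y, z)‖ = f (y, z) := fun y =>
        Real.norm_of_nonneg (sq_nonneg _)
      simp_rw [this]
      exact (hinner z).symm
  calc ∫ y, (∫ z, (F z - if y ≤ z then (1:ℝ) else 0) ^ 2) ∂P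
      = ∫ z, ∫ y, f (y, z) ∂P := integral_integral_swap hfint
    _ = ∫ z, ((F z - G z) ^ 2 + G z * (1 - G z)) :=
        integral_congr_ae (Filter.Eventually.of_forall fun z => hinner z)

/-- CRPS is a proper scoring rule: for CDFs `F`, `G` with `∫(F-G)² < ∞`,
`E_{y∼P_G}[CRPS(F,y)] ≥ E_{y∼P_G}[CRPS(G,y)]`, with equality iff `F = G` a.e. -/
theorem crps_proper_scoring_rule
    (P : Measure ℝ) [IsProbabilityMeasure P] (F G : ℝ → ℝ)
    (hG : ∀ z, G z = (P (Iic z)).toReal)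
    (hFmeas : Measurable F) (hFmono : Monotone F)
    (hFrange : ∀ z, F z ∈ Icc (0 : ℝ) 1)
    (hint₁ : Integrable (fun z => (F z - G z) ^ 2))
    (hint₂ : Integrable (fun z => G z * (1 - G z))) :
    (∫ y, (∫ z, (G z - if y ≤ z then (1 : ℝ) else 0) ^ 2) ∂P
        ≤ ∫ y, (∫ z, (F z - if y ≤ z then (1 : ℝ) else 0) ^ 2) ∂P)
    ∧ ((∫ y, (∫ z, (F z - if y ≤ z then (1 : ℝ) else 0) ^ 2) ∂P
          = ∫ y, (∫ z, (G z - if y ≤ z then (1 : ℝ) else 0) ^ 2) ∂P)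
        ↔ F =ᵐ[volume] G) := by
  have hGmeas : Measurable G := by
    have hmono : Monotone G := by
      intro a b hab
      rw [hG a, hG b]
      exact ENNReal.toReal_mono (measure_ne_top _ _) (measure_mono (Iic_subset_Iic.2 hab))
    exact hmono.measurable
  have hintG : Integrable (fun z => (G z - G z) ^ 2 + G z * (1 - G z)) := by
    refine hint₂.congr (Filter.Eventually.of_forall fun z => ?_)
    simp
  have hF := crps_score_eq P F G hG hFmeas (hint₁.add hint₂)
  have hGG := crps_score_eq P G G hG hGmeas hintG
  have hGval : ∫ y, (∫ z, (G z - if y ≤ z then (1 : ℝ) else 0) ^ 2) ∂P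
      = ∫ z, G z * (1 - G z) := by
    rw [hGG]
    exact integral_congr_ae (Filter.Eventually.of_forall fun z => by simp)
  have hFval : ∫ y, (∫ z, (F z - if y ≤ z then (1 : ℝ) else 0) ^ 2) ∂P
      = (∫ z, (F z - G z) ^ 2) + ∫ z, G z * (1 - G z) := by
    rw [hF, integral_add hint₁ hint₂]
  constructor
  · rw [hGval, hFval]
    have : (0:ℝ) ≤ ∫ z, (F z - G z) ^ 2 := integral_nonneg fun z => sq_nonneg _
    linarith
  · rw [hGval, hFval]
    constructor
    · intro h
      have hz : ∫ z, (F z - G z) ^ 2 = 0 := by linarith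
      have := (integral_eq_zero_iff_of_nonneg (fun z => sq_nonneg (F z - G z)) hint₁).1 hz
      filter_upwards [this] with z hzz
      have : (F z - G z) ^ 2 = 0 := hzz
      have := pow_eq_zero_iff (n := 2) (by norm_num) |>.1 this
      linarith [sub_eq_zero.1 this]
    · intro h
      have hz : ∫ z, (F z - G z) ^ 2 = 0 := by
        rw [integral_eq_zero_iff_of_nonneg (fun z => sq_nonneg (F z - G z)) hint₁]
        filter_upwards [h] with z hzz
        simp [hzz]
      linarith
end
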